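/- Equal-revenue property of the submodular-f construction: let α_t and f as above (f(S_t) = 1/(1−α_t), c_i = 2^{i−1} so c(S_t) = t). Then for every t ∈ {0,…,2^n − 2}, the contract α_{t+1} equals (c(S_{t+1}) − c(S_t))/(f(S_{t+1}) − f(S_t)), and the principal's utility at each critical value is exactly 1: (1 − α_t)·f(S_t) = 1 for all t ≥ 1. -/

import Mathlib

noncomputable def alphaSeq : ℕ → ℝ
  | 0 => 0
  | t + 1 => alphaSeq t + (1/2) * (Real.sqrt (4 * (alphaSeq t)^2 - 8 * alphaSeq t + 5) - 1)

/-- Binary encoding of a subset of `Fin n`: action `i` (zero-based) has weight `2^i`. -/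
def enc {n : ℕ} (S : Finset (Fin n)) : ℕ := ∑ i ∈ S, 2 ^ (i : ℕ)

/-- The equal-revenue reward function: `f(S_t) = 1/(1 - α_t)`. -/
noncomputable def fSet {n : ℕ} (S : Finset (Fin n)) : ℝ := 1 / (1 - alphaSeq (enc S))

/-- Additive costs with `c_i = 2^i` (zero-based), so `c(S_t) = t`. -/
noncomputable def cSet {n : ℕ} (S : Finset (Fin n)) : ℝ := ∑ i ∈ S, (2 : ℝ) ^ (i : ℕ)

lemma alpha_arg_nonneg (a : ℝ) : 0 ≤ 4 * a^2 - 8 * a + 5 := by nlinarith [sq_nonneg (a - 1)]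

lemma alpha_bounds : ∀ t, 0 ≤ alphaSeq t ∧ alphaSeq t < 1 := by
  intro t
  induction t with
  | zero => simp [alphaSeq]
  | succ t ih =>
    obtain ⟨h0, h1⟩ := ih
    set a := alphaSeq t with ha
    have hs1 : (1 : ℝ) ≤ Real.sqrt (4 * a^2 - 8 * a + 5) := by
      rw [show (1:ℝ) = Real.sqrt 1 by simp]
      exact Real.sqrt_le_sqrt (by nlinarith [sq_nonneg (a - 1)])
    have hs2 : Real.sqrt (4 * a^2 - 8 * a + 5) < 3 - 2 * a := by
      have h3 : (0:ℝ) < 3 - 2 * a := by linarith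
      rw [show (3 - 2*a : ℝ) = Real.sqrt ((3 - 2*a)^2) by
        rw [Real.sqrt_sq h3.le]]
      apply Real.sqrt_lt_sqrt (alpha_arg_nonneg a)
      nlinarith
    constructor
    · show 0 ≤ a + (1/2) * (Real.sqrt (4 * a^2 - 8 * a + 5) - 1)
      linarith
    · show a + (1/2) * (Real.sqrt (4 * a^2 - 8 * a + 5) - 1) < 1
      linarith

lemma alpha_lt_succ (t : ℕ) : alphaSeq t < alphaSeq (t + 1) := by
  obtain ⟨h0, h1⟩ := alpha_bounds t
  set a := alphaSeq t with ha
  have hs1 : (1 : ℝ) < Real.sqrt (4 * a^2 - 8 * a + 5) := by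
    rw [show (1:ℝ) = Real.sqrt 1 by simp]
    apply Real.sqrt_lt_sqrt (by norm_num)
    nlinarith [sq_nonneg (a - 1)]
  show a < a + (1/2) * (Real.sqrt (4 * a^2 - 8 * a + 5) - 1)
  linarith

lemma alpha_quad (t : ℕ) :
    (alphaSeq (t+1))^2 - 2 * alphaSeq t * alphaSeq (t+1) + alphaSeq t + alphaSeq (t+1) - 1 = 0 := by
  set a := alphaSeq t with ha
  have hsq : (Real.sqrt (4 * a^2 - 8 * a + 5))^2 = 4 * a^2 - 8 * a + 5 :=
    Real.sq_sqrt (alpha_arg_nonneg a)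
  show (a + (1/2) * (Real.sqrt (4 * a^2 - 8 * a + 5) - 1))^2
      - 2 * a * (a + (1/2) * (Real.sqrt (4 * a^2 - 8 * a + 5) - 1)) + a
      + (a + (1/2) * (Real.sqrt (4 * a^2 - 8 * a + 5) - 1)) - 1 = 0
  nlinarith [hsq]

lemma cSet_eq_enc {n : ℕ} (S : Finset (Fin n)) : cSet S = (enc S : ℝ) := by
  simp [cSet, enc]

theorem equal_revenue_property (n : ℕ) :
    (∀ S T : Finset (Fin n), enc T = enc S + 1 →
      alphaSeq (enc T) = (cSet T - cSet S) / (fSet T - fSet S)) ∧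
    (∀ S : Finset (Fin n), S.Nonempty → (1 - alphaSeq (enc S)) * fSet S = 1) := by
  constructor
  · intro S T hST
    obtain ⟨ha0, ha1⟩ := alpha_bounds (enc S)
    obtain ⟨hb0, hb1⟩ := alpha_bounds (enc S + 1)
    have hab : alphaSeq (enc S) < alphaSeq (enc S + 1) := alpha_lt_succ (enc S)
    have hquad := alpha_quad (enc S)
    set a := alphaSeq (enc S) with ha
    set b := alphaSeq (enc S + 1) with hb
    have h1a : (1 : ℝ) - a ≠ 0 := by linarith
    have h1b : (1 : ℝ) - b ≠ 0 := by linarith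
    have hc : cSet T - cSet S = 1 := by
      rw [cSet_eq_enc, cSet_eq_enc, hST]; push_cast; ring
    have hf : fSet T - fSet S = (b - a) / ((1 - a) * (1 - b)) := by
      rw [fSet, fSet, hST, ← ha, ← hb, div_sub_div _ _ h1b h1a]; ring_nf
    have hpos : (0:ℝ) < (b - a) / ((1 - a) * (1 - b)) :=
      div_pos (by linarith) (by nlinarith)
    rw [hST, hc, hf, ← hb]
    rw [one_div_div, eq_div_iff (show b - a ≠ 0 from ne_of_gt (by linarith))]
    nlinarith [hquad]
  · intro S hS
    have henc : 0 < enc S := by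
      obtain ⟨i, hi⟩ := hS
      exact Finset.sum_pos' (fun j _ => Nat.zero_le _) ⟨i, hi, Nat.pow_pos (by norm_num)⟩
    obtain ⟨h0, h1⟩ := alpha_bounds (enc S)
    rw [fSet, mul_one_div]
    exact div_self (by linarith)
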